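/- arXiv:2505.17032 — 2 statements merged into one kernel-verified Lean document; each statement's English description precedes it below -/
import Mathlib

section
/- In the deterministic setting of the previous statement, the loss functional l(y₀) = |g(x(T)) − ỹ(T;y₀)|², where ỹ(·;y₀) solves ỹ' = −f(t,x(t),ỹ), ỹ(0)=y₀, attains the value 0 at y₀* = u(0,ξ), and if additionally f is C^1 in y, then l(y₀) = 0 implies y₀ = u(0,ξ). That is, the loss has a unique global minimizer equal to the PDE solution at the initial point. -/
open Set

/-- The shooting loss `l(y₀) = |g(x(T)) − ỹ(T; y₀)|²` attains the value `0`
at `y₀* = u(0,ξ)`, and (with `f` C¹ in `y`) this is the unique global minimizer. -/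
theorem shooting_loss_unique_minimizer
    (T L ξ : ℝ) (hT : 0 ≤ T) (hL : 0 ≤ L)
    (μ : ℝ → ℝ → ℝ) (f : ℝ → ℝ → ℝ → ℝ) (g : ℝ → ℝ)
    (u : ℝ → ℝ → ℝ) (hu : ContDiff ℝ 1 (Function.uncurry u))
    (hPDE : ∀ t ∈ Set.Icc (0 : ℝ) T, ∀ x : ℝ,
      deriv (fun s => u s x) t + μ t x * deriv (fun y => u t y) x
        + f t x (u t x) = 0)
    (hterm : ∀ x, u T x = g x)
    (hfL : ∀ t x a b, |f t x a - f t x b| ≤ L * |a - b|)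
    (hfC1 : ∀ t x, ContDiff ℝ 1 (fun y => f t x y))
    (x : ℝ → ℝ) (hx : ∀ t ∈ Set.Icc (0 : ℝ) T, HasDerivAt x (μ t (x t)) t)
    (hx0 : x 0 = ξ)
    -- the flow `y₀ ↦ ỹ(·; y₀)` of the ODE `ỹ' = -f(t, x(t), ỹ)`
    (Yt : ℝ → ℝ → ℝ)
    (hY0 : ∀ y₀, Yt y₀ 0 = y₀)
    (hYode : ∀ y₀, ∀ t ∈ Set.Icc (0 : ℝ) T,
      HasDerivAt (Yt y₀) (-(f t (x t) (Yt y₀ t))) t) :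
    |g (x T) - Yt (u 0 ξ) T| ^ 2 = 0
    ∧ ∀ y₀ : ℝ, |g (x T) - Yt y₀ T| ^ 2 = 0 → y₀ = u 0 ξ := by
  -- the vector field
  set v : ℝ → ℝ → ℝ := fun t y => -(f t (x t) y) with hv_def
  have hvLip : ∀ t : ℝ, LipschitzOnWith ⟨L, hL⟩ (v t) Set.univ := by
    intro t
    apply LipschitzWith.lipschitzOnWith
    apply LipschitzWith.of_dist_le_mul
    intro a b
    simp only [hv_def, Real.dist_eq]
    have : -(f t (x t) a) - -(f t (x t) b) = -(f t (x t) a - f t (x t) b) := by ring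
    rw [this, abs_neg]
    exact hfL t (x t) a b
  -- the function h t = u t (x t) solves the ODE
  set h : ℝ → ℝ := fun t => u t (x t) with hh_def
  have hudiff := hu.differentiable one_ne_zero
  have hh' : ∀ t ∈ Set.Icc (0 : ℝ) T, HasDerivAt h (v t (h t)) t := by
    intro t ht
    have hxd := hx t ht
    have hc : HasDerivAt (fun s => (s, x s)) ((1 : ℝ), μ t (x t)) t :=
      (hasDerivAt_id t).prodMk hxd
    have hF : HasFDerivAt (Function.uncurry u)
        (fderiv ℝ (Function.uncurry u) (t, x t)) (t, x t) :=
      (hudiff (t, x t)).hasFDerivAt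
    have hcomp : HasDerivAt h
        ((fderiv ℝ (Function.uncurry u) (t, x t)) (1, μ t (x t))) t :=
      by have := hF.comp_hasDerivAt t hc; exact this
    -- partial derivatives
    have hpt : HasDerivAt (fun s => u s (x t))
        ((fderiv ℝ (Function.uncurry u) (t, x t)) (1, 0)) t := by
      have hc1 : HasDerivAt (fun s : ℝ => (s, x t)) ((1 : ℝ), (0 : ℝ)) t :=
        (hasDerivAt_id t).prodMk (hasDerivAt_const t (x t))
      exact hF.comp_hasDerivAt t hc1
    have hpx : HasDerivAt (fun y => u t y)
        ((fderiv ℝ (Function.uncurry u) (t, x t)) (0, 1)) (x t) := by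
      have hc2 : HasDerivAt (fun y : ℝ => (t, y)) ((0 : ℝ), (1 : ℝ)) (x t) :=
        (hasDerivAt_const (x t) t).prodMk (hasDerivAt_id (x t))
      exact hF.comp_hasDerivAt (x t) hc2
    have hsum : ((1 : ℝ), μ t (x t)) = ((1 : ℝ), (0 : ℝ)) + μ t (x t) • ((0 : ℝ), (1 : ℝ)) := by
      simp
    have hval : (fderiv ℝ (Function.uncurry u) (t, x t)) (1, μ t (x t)) =
        (fderiv ℝ (Function.uncurry u) (t, x t)) (1, 0)
          + μ t (x t) * (fderiv ℝ (Function.uncurry u) (t, x t)) (0, 1) := by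
      rw [hsum, map_add, map_smul, smul_eq_mul]
    have hPDEt := hPDE t ht (x t)
    rw [hpt.deriv, hpx.deriv] at hPDEt
    have : (fderiv ℝ (Function.uncurry u) (t, x t)) (1, μ t (x t)) =
        -(f t (x t) (u t (x t))) := by
      rw [hval]; linarith
    rw [this] at hcomp
    exact hcomp
  -- continuity facts
  have hhc : ContinuousOn h (Set.Icc 0 T) :=
    fun t ht => ((hh' t ht).continuousAt).continuousWithinAt
  have hYc : ∀ y₀, ContinuousOn (Yt y₀) (Set.Icc 0 T) :=
    fun y₀ t ht => ((hYode y₀ t ht).continuousAt).continuousWithinAt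
  have hmemT : T ∈ Set.Icc (0 : ℝ) T := ⟨hT, le_refl T⟩
  have hmem0 : (0 : ℝ) ∈ Set.Icc (0 : ℝ) T := ⟨le_refl 0, hT⟩
  -- Part 1: h and Yt (u 0 ξ) agree on [0, T]
  have heq1 : Set.EqOn h (Yt (u 0 ξ)) (Set.Icc 0 T) := by
    apply ODE_solution_unique_of_mem_Icc_right (v := v) (s := fun _ => Set.univ) (fun t _ => hvLip t)
      hhc (fun t ht => (hh' t (Set.Ico_subset_Icc_self ht)).hasDerivWithinAt)
      (fun _ _ => Set.mem_univ _)
      (hYc (u 0 ξ))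
      (fun t ht => (hYode (u 0 ξ) t (Set.Ico_subset_Icc_self ht)).hasDerivWithinAt)
      (fun _ _ => Set.mem_univ _)
    simp [hh_def, hY0, hx0]
  have hT1 : g (x T) = Yt (u 0 ξ) T := by
    have := heq1 hmemT
    rw [hh_def] at this
    simp only at this
    rw [hterm (x T)] at this
    exact this
  refine ⟨by rw [hT1]; simp, ?_⟩
  -- Part 2
  intro y₀ hy₀
  have habs : |g (x T) - Yt y₀ T| = 0 := by
    have := sq_eq_zero_iff.mp hy₀
    exact this
  have hTval : Yt y₀ T = Yt (u 0 ξ) T := by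
    have : g (x T) - Yt y₀ T = 0 := abs_eq_zero.mp habs
    linarith [hT1]
  have heq2 : Set.EqOn (Yt y₀) (Yt (u 0 ξ)) (Set.Icc 0 T) := by
    apply ODE_solution_unique_of_mem_Icc_left (v := v) (s := fun _ => Set.univ) (fun t _ => hvLip t)
      (hYc y₀)
      (fun t ht => (hYode y₀ t (Set.Ioc_subset_Icc_self ht)).hasDerivWithinAt)
      (fun _ _ => Set.mem_univ _)
      (hYc (u 0 ξ))
      (fun t ht => (hYode (u 0 ξ) t (Set.Ioc_subset_Icc_self ht)).hasDerivWithinAt)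
      (fun _ _ => Set.mem_univ _)
      hTval
  have := heq2 hmem0
  rwa [hY0, hY0] at this
end

section
/- Quadratic growth of the solution of the controlled linear dynamics: fix a grid 0 = t_0 < ... < t_N = T and define Y_{t_{n+1}} = Y_{t_n} − f(t_n, X_{t_n}, Y_{t_n}, Z_{t_n})Δt_n + Z_{t_n}·ΔW_n with f Lipschitz in (y,z) with constant L, Y_0 and all Z_{t_n} square-integrable and appropriately adapted. Then there is a constant C = C(L,T) (independent of N) such that E[|Y_{t_N}|²] ≤ C (E[|Y_0|²] + ∑_{n=0}^{N−1} (E[|f(t_n,X_{t_n},0,0)|²] + E[|Z_{t_n}|²]) Δt_n + 1). -/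
open MeasureTheory ProbabilityTheory

namespace DeepBSDEAux
variable {Ω : Type} {m0 : MeasurableSpace Ω} {P : Measure Ω}

lemma integrable_mul_of_memL2 {f g : Ω → ℝ} (hf : MemLp f 2 P) (hg : MemLp g 2 P) :
    Integrable (fun ω => f ω * g ω) P := by
  have h1 : Integrable (fun ω => (f ω ^ 2 + g ω ^ 2) / 2) P :=
    (hf.integrable_sq.add hg.integrable_sq).div_const 2
  refine h1.mono' (hf.aestronglyMeasurable.mul hg.aestronglyMeasurable) ?_
  filter_upwards with ω
  rw [Real.norm_eq_abs, abs_mul]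
  nlinarith [sq_nonneg (|f ω| - |g ω|), sq_abs (f ω), sq_abs (g ω), abs_nonneg (f ω),
    abs_nonneg (g ω), abs_nonneg ((f ω ^ 2 + g ω ^ 2) / 2), le_abs_self ((f ω ^ 2 + g ω ^ 2) / 2)]

lemma memL2_comp {d : ℕ} {Z : Ω → Fin d → ℝ} (h : MemLp Z 2 P) (i : Fin d) :
    MemLp (fun ω => Z ω i) 2 P :=
  h.of_le ((continuous_apply i).comp_aestronglyMeasurable h.aestronglyMeasurable)
    (Filter.Eventually.of_forall fun ω => norm_le_pi_norm (Z ω) i)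

lemma indepFun_comp {α γ : Type*} [MeasurableSpace α] [MeasurableSpace γ]
    {W : Ω → α} {G : MeasurableSpace Ω}
    (hInd : Indep (MeasurableSpace.comap W inferInstance) G P)
    {φ : Ω → ℝ} {h : α → γ} (hφ : Measurable[G] φ) (hh : Measurable h) :
    IndepFun φ (fun ω => h (W ω)) P := by
  have h1 : MeasurableSpace.comap φ inferInstance ≤ G := hφ.comap_le
  have h2 : MeasurableSpace.comap (fun ω => h (W ω)) inferInstance
      ≤ MeasurableSpace.comap W inferInstance := by
    rw [show (fun ω => h (W ω)) = h ∘ W from rfl, ← MeasurableSpace.comap_comp]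
    exact MeasurableSpace.comap_mono hh.comap_le
  exact indep_of_indep_of_le_right (indep_of_indep_of_le_left hInd.symm h1) h2

lemma step_key {d : ℕ} {G : MeasurableSpace Ω} (hG : G ≤ m0) [IsProbabilityMeasure P]
    {M : Ω → ℝ} {Z W : Ω → Fin d → ℝ} {Δ : ℝ}
    (hM : Measurable[G] M) (hM2 : MemLp M 2 P)
    (hZ : Measurable[G] Z) (hZ2 : MemLp Z 2 P)
    (hW2 : MemLp W 2 P)
    (hInd : Indep (MeasurableSpace.comap W (inferInstance : MeasurableSpace (Fin d → ℝ))) G P)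
    (hmean : ∀ i, (∫ ω, W ω i ∂P) = 0)
    (hcov : ∀ i j, (∫ ω, W ω i * W ω j ∂P) = if i = j then Δ else 0) :
    MemLp (fun ω => M ω + ∑ i, Z ω i * W ω i) 2 P ∧
    (∫ ω, (M ω + ∑ i, Z ω i * W ω i) ^ 2 ∂P)
      = (∫ ω, M ω ^ 2 ∂P) + Δ * ∫ ω, (∑ i, Z ω i ^ 2) ∂P := by
  have hZi : ∀ i : Fin d, Measurable[G] (fun ω => Z ω i) :=
    fun i => (measurable_pi_apply i).comp hZ
  have hZi2 : ∀ i : Fin d, MemLp (fun ω => Z ω i) 2 P := memL2_comp hZ2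
  have hWi2 : ∀ i : Fin d, MemLp (fun ω => W ω i) 2 P := memL2_comp hW2
  -- integrability of (Z i Z j)(W i W j)
  have hIntZZ : ∀ i j : Fin d, Integrable (fun ω => Z ω i * Z ω j) P :=
    fun i j => integrable_mul_of_memL2 (hZi2 i) (hZi2 j)
  have hIntWW : ∀ i j : Fin d, Integrable (fun ω => W ω i * W ω j) P :=
    fun i j => integrable_mul_of_memL2 (hWi2 i) (hWi2 j)
  have hIndZZWW : ∀ i j : Fin d,
      IndepFun (fun ω => Z ω i * Z ω j) (fun ω => W ω i * W ω j) P := by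
    intro i j
    exact indepFun_comp hInd ((hZi i).mul (hZi j))
      ((measurable_pi_apply i).mul (measurable_pi_apply j))
  have hIntT : ∀ i j : Fin d, Integrable (fun ω => Z ω i * Z ω j * (W ω i * W ω j)) P :=
    fun i j => (hIndZZWW i j).integrable_mul (hIntZZ i j) (hIntWW i j)
  have hIntTval : ∀ i j : Fin d, (∫ ω, Z ω i * Z ω j * (W ω i * W ω j) ∂P)
      = (∫ ω, Z ω i * Z ω j ∂P) * (if i = j then Δ else 0) := by
    intro i j
    rw [(hIndZZWW i j).integral_fun_mul_eq_mul_integral (hIntZZ i j).1 (hIntWW i j).1, hcov]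
  -- B and its square
  set B : Ω → ℝ := fun ω => ∑ i, Z ω i * W ω i with hB
  have hBsq : ∀ ω, B ω ^ 2 = ∑ i : Fin d, ∑ j : Fin d, Z ω i * Z ω j * (W ω i * W ω j) := by
    intro ω
    rw [sq, Finset.sum_mul_sum]
    exact Finset.sum_congr rfl fun i _ => Finset.sum_congr rfl fun j _ => by ring
  have hIntB2 : Integrable (fun ω => B ω ^ 2) P := by
    have : Integrable (fun ω => ∑ i : Fin d, ∑ j : Fin d,
        Z ω i * Z ω j * (W ω i * W ω j)) P :=
      integrable_finset_sum _ fun i _ => integrable_finset_sum _ fun j _ => hIntT i j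
    exact this.congr (Filter.Eventually.of_forall fun ω => (hBsq ω).symm)
  have hIntB2val : (∫ ω, B ω ^ 2 ∂P) = Δ * ∫ ω, (∑ i, Z ω i ^ 2) ∂P := by
    calc (∫ ω, B ω ^ 2 ∂P)
        = ∫ ω, ∑ i : Fin d, ∑ j : Fin d, Z ω i * Z ω j * (W ω i * W ω j) ∂P :=
          integral_congr_ae (Filter.Eventually.of_forall hBsq)
      _ = ∑ i : Fin d, ∑ j : Fin d, ∫ ω, Z ω i * Z ω j * (W ω i * W ω j) ∂P := by
          rw [integral_finset_sum _ fun i _ => integrable_finset_sum _ fun j _ => hIntT i j]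
          exact Finset.sum_congr rfl fun i _ =>
            integral_finset_sum _ fun j _ => hIntT i j
      _ = ∑ i : Fin d, ∑ j : Fin d,
            (∫ ω, Z ω i * Z ω j ∂P) * (if i = j then Δ else 0) := by
          exact Finset.sum_congr rfl fun i _ => Finset.sum_congr rfl fun j _ => hIntTval i j
      _ = ∑ i : Fin d, (∫ ω, Z ω i * Z ω i ∂P) * Δ := by
          refine Finset.sum_congr rfl fun i _ => ?_
          rw [Finset.sum_eq_single i]
          · simp
          · intro j _ hj; simp [(Ne.symm hj)]
          · simp
      _ = Δ * ∑ i : Fin d, ∫ ω, Z ω i ^ 2 ∂P := by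
          rw [Finset.mul_sum]
          refine Finset.sum_congr rfl fun i _ => ?_
          rw [mul_comm]
          congr 1
          simp [sq]
      _ = Δ * ∫ ω, (∑ i, Z ω i ^ 2) ∂P := by
          rw [integral_finset_sum _ fun i _ => (hZi2 i).integrable_sq]
  -- B is in L2
  have hBaesm : AEStronglyMeasurable[m0] B P := by
    apply Finset.aestronglyMeasurable_fun_sum
    intro i _
    exact ((hZi i).mono hG le_rfl).aestronglyMeasurable.mul (hWi2 i).aestronglyMeasurable
  have hB2 : MemLp B 2 P := (memLp_two_iff_integrable_sq hBaesm).2 hIntB2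
  -- cross term
  have hIndMZW : ∀ i : Fin d, IndepFun (fun ω => M ω * Z ω i) (fun ω => W ω i) P :=
    fun i => indepFun_comp hInd (hM.mul (hZi i)) (measurable_pi_apply i)
  have hIntMZ : ∀ i : Fin d, Integrable (fun ω => M ω * Z ω i) P :=
    fun i => integrable_mul_of_memL2 hM2 (hZi2 i)
  have hIntMZW : ∀ i : Fin d, Integrable (fun ω => M ω * Z ω i * W ω i) P :=
    fun i => (hIndMZW i).integrable_mul (hIntMZ i) ((hWi2 i).integrable one_le_two)
  have hMB : ∀ ω, M ω * B ω = ∑ i : Fin d, M ω * Z ω i * W ω i := by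
    intro ω
    rw [hB, Finset.mul_sum]
    exact Finset.sum_congr rfl fun i _ => by ring
  have hIntMB : Integrable (fun ω => M ω * B ω) P :=
    (integrable_finset_sum _ fun i _ => hIntMZW i).congr
      (Filter.Eventually.of_forall fun ω => (hMB ω).symm)
  have hIntMBval : (∫ ω, M ω * B ω ∂P) = 0 := by
    calc (∫ ω, M ω * B ω ∂P)
        = ∫ ω, ∑ i : Fin d, M ω * Z ω i * W ω i ∂P :=
          integral_congr_ae (Filter.Eventually.of_forall hMB)
      _ = ∑ i : Fin d, ∫ ω, M ω * Z ω i * W ω i ∂P :=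
          integral_finset_sum _ fun i _ => hIntMZW i
      _ = ∑ i : Fin d, (∫ ω, M ω * Z ω i ∂P) * (∫ ω, W ω i ∂P) :=
          Finset.sum_congr rfl fun i _ =>
            (hIndMZW i).integral_fun_mul_eq_mul_integral (hIntMZ i).1 (hWi2 i).aestronglyMeasurable
      _ = 0 := by simp [hmean]
  constructor
  · exact hM2.add hB2
  · have hexp : ∀ ω, (M ω + B ω) ^ 2 = M ω ^ 2 + (2 * (M ω * B ω) + B ω ^ 2) :=
      fun ω => by ring
    calc (∫ ω, (M ω + B ω) ^ 2 ∂P)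
        = ∫ ω, M ω ^ 2 + (2 * (M ω * B ω) + B ω ^ 2) ∂P :=
          integral_congr_ae (Filter.Eventually.of_forall hexp)
      _ = (∫ ω, M ω ^ 2 ∂P) + ((∫ ω, 2 * (M ω * B ω) ∂P) + ∫ ω, B ω ^ 2 ∂P) := by
          have hsum2 : Integrable (fun ω => 2 * (M ω * B ω) + B ω ^ 2) P :=
            (hIntMB.const_mul 2).add hIntB2
          have h2' : Integrable (fun ω => 2 * (M ω * B ω)) P := hIntMB.const_mul 2
          rw [integral_add hM2.integrable_sq hsum2, integral_add h2' hIntB2]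
      _ = (∫ ω, M ω ^ 2 ∂P) + Δ * ∫ ω, (∑ i, Z ω i ^ 2) ∂P := by
          rw [integral_const_mul, hIntMBval, hIntB2val]
          ring

lemma memL2_abs {f : Ω → ℝ} (h : MemLp f 2 P) : MemLp (fun ω => |f ω|) 2 P := by
  simpa [Real.norm_eq_abs] using h.norm

lemma memL2_sqrt_sum_sq {d : ℕ} {Z : Ω → Fin d → ℝ} (h : MemLp Z 2 P) :
    MemLp (fun ω => Real.sqrt (∑ i, Z ω i ^ 2)) 2 P := by
  have haesm : AEStronglyMeasurable (fun ω => ∑ i, Z ω i ^ 2) P :=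
    Finset.aestronglyMeasurable_fun_sum _ fun i _ => (memL2_comp h i).integrable_sq.1
  refine (memLp_two_iff_integrable_sq
    (Real.continuous_sqrt.comp_aestronglyMeasurable haesm)).2 ?_
  have hint : Integrable (fun ω => ∑ i, Z ω i ^ 2) P :=
    integrable_finset_sum _ fun i _ => (memL2_comp h i).integrable_sq
  refine hint.congr (Filter.Eventually.of_forall fun ω => ?_)
  simp only []
  rw [Real.sq_sqrt (Finset.sum_nonneg fun i _ => sq_nonneg (Z ω i))]

end DeepBSDEAux

open DeepBSDEAux

set_option maxHeartbeats 3000000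

/-- Discrete Grönwall-type a priori bound for the forward-simulated `Y`-process
in the Deep BSDE method: there is a constant `C = C(L,T)`, independent of the
grid, the dimension and the data, such that
`E[|Y_{t_N}|²] ≤ C (E[|Y₀|²] + ∑ (E[|f(t_n,X_{t_n},0,0)|²] + E[|Z_{t_n}|²]) Δt_n + 1)`. -/
theorem deep_bsde_discrete_apriori_bound (L T : ℝ) (hL : 0 ≤ L) (hT : 0 < T) :
    ∃ C : ℝ, 0 < C ∧
    ∀ (Ω : Type) (m0 : MeasurableSpace Ω) (P : Measure Ω),
      IsProbabilityMeasure P →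
    ∀ (d N : ℕ) (t : ℕ → ℝ),
      t 0 = 0 → t N = T → (∀ n < N, t n < t (n + 1)) →
    ∀ (F : ℕ → MeasurableSpace Ω), (∀ n, F n ≤ m0) → Monotone F →
    ∀ (f : ℝ → (Fin d → ℝ) → ℝ → (Fin d → ℝ) → ℝ)
      (X : ℕ → Ω → Fin d → ℝ) (Y : ℕ → Ω → ℝ) (Z : ℕ → Ω → Fin d → ℝ)
      (ΔW : ℕ → Ω → Fin d → ℝ),
    -- f Lipschitz in (y, z) with constant L, uniformly in (t, x)
    (∀ s x y z y' z', |f s x y z - f s x y' z'|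
        ≤ L * (|y - y'| + Real.sqrt (∑ i, (z i - z' i) ^ 2))) →
    -- the scheme
    (∀ n < N, ∀ ω, Y (n + 1) ω
        = Y n ω - f (t n) (X n ω) (Y n ω) (Z n ω) * (t (n + 1) - t n)
          + ∑ i, Z n ω i * ΔW n ω i) →
    -- adaptedness and integrability
    (∀ n, Measurable[F n] (X n)) →
    Measurable[F 0] (Y 0) → MemLp (Y 0) 2 P →
    (∀ n < N, Measurable[F n] (Z n)) → (∀ n < N, MemLp (Z n) 2 P) →
    (∀ n < N, MemLp (fun ω => f (t n) (X n ω) 0 0) 2 P) →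
    -- Brownian increments: independent of the past, mean zero, covariance Δtₙ I
    (∀ n < N, Measurable[F (n + 1)] (ΔW n)) →
    (∀ n < N, MemLp (ΔW n) 2 P) →
    (∀ n < N, Indep (MeasurableSpace.comap (ΔW n) inferInstance) (F n) P) →
    (∀ n < N, ∀ i, (∫ ω, ΔW n ω i ∂P) = 0) →
    (∀ n < N, ∀ i j, (∫ ω, ΔW n ω i * ΔW n ω j ∂P)
        = if i = j then t (n + 1) - t n else 0) →
    (∫ ω, (Y N ω) ^ 2 ∂P)
      ≤ C * ((∫ ω, (Y 0 ω) ^ 2 ∂P)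
          + (∑ n ∈ Finset.range N,
              ((∫ ω, (f (t n) (X n ω) 0 0) ^ 2 ∂P)
                + ∫ ω, (∑ i, (Z n ω i) ^ 2) ∂P) * (t (n + 1) - t n))
          + 1) := by
  refine ⟨2 + 6 * Real.exp (2 * L * T) * T * (1 + L ^ 2) * (1 + T), by positivity, ?_⟩
  intro Ω m0 P hP d N t ht0 htN htlt F hFle hFmono f X Y Z ΔW hLip hScheme hXmeas
    hY0meas hY0L2 hZmeas hZL2 hf0L2 hWmeas hWL2 hWindep hWmean hWcov
  set C : ℝ := 2 + 6 * Real.exp (2 * L * T) * T * (1 + L ^ 2) * (1 + T) with hC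
  -- abbreviations
  obtain ⟨Δ, hΔ⟩ : ∃ Δ : ℕ → ℝ, ∀ n, Δ n = t (n + 1) - t n := ⟨_, fun _ => rfl⟩
  obtain ⟨B, hB⟩ : ∃ B : ℕ → Ω → ℝ, ∀ n ω, B n ω = ∑ i, Z n ω i * ΔW n ω i :=
    ⟨_, fun _ _ => rfl⟩
  obtain ⟨M, hM⟩ : ∃ M : ℕ → Ω → ℝ, ∀ n ω,
      M n ω = Y 0 ω + ∑ k ∈ Finset.range n, B k ω := ⟨_, fun _ _ => rfl⟩
  obtain ⟨Φ, hΦ⟩ : ∃ Φ : ℕ → Ω → ℝ, ∀ n ω,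
      Φ n ω = f (t n) (X n ω) (Y n ω) (Z n ω) := ⟨_, fun _ _ => rfl⟩
  obtain ⟨g, hg⟩ : ∃ g : ℕ → Ω → ℝ, ∀ n ω,
      g n ω = |f (t n) (X n ω) 0 0| + L * Real.sqrt (∑ i, Z n ω i ^ 2) + L * |M n ω| :=
    ⟨_, fun _ _ => rfl⟩
  obtain ⟨S, hS⟩ : ∃ S : ℕ → Ω → ℝ, ∀ n ω,
      S n ω = ∑ k ∈ Finset.range n, Δ k * |Φ k ω| := ⟨_, fun _ _ => rfl⟩
  -- facts about the grid
  have ht_le : ∀ m n : ℕ, m ≤ n → n ≤ N → t m ≤ t n := by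
    intro m n hmn hnN
    induction hmn with
    | refl => exact le_rfl
    | @step p hmp ih =>
        exact le_trans (ih (by omega)) (le_of_lt (htlt p (by omega)))
  have ht0n : ∀ n, n ≤ N → 0 ≤ t n := fun n hn => ht0 ▸ ht_le 0 n (Nat.zero_le n) hn
  have htT : ∀ n, n ≤ N → t n ≤ T := fun n hn => htN ▸ ht_le n N hn le_rfl
  have hΔpos : ∀ n, n < N → 0 < Δ n := fun n hn => by
    rw [hΔ]; exact sub_pos.2 (htlt n hn)
  have hΔsum : ∀ n, (∑ k ∈ Finset.range n, Δ k) = t n - t 0 := by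
    intro n
    calc (∑ k ∈ Finset.range n, Δ k) = ∑ k ∈ Finset.range n, (t (k + 1) - t k) :=
          Finset.sum_congr rfl fun k _ => hΔ k
      _ = t n - t 0 := Finset.sum_range_sub t n
  -- integrability shorthands
  have hIntZ2 : ∀ n, n < N → Integrable (fun ω => ∑ i, Z n ω i ^ 2) P := fun n hn =>
    integrable_finset_sum _ fun i _ => (memL2_comp (hZL2 n hn) i).integrable_sq
  have hIntf0 : ∀ n, n < N → Integrable (fun ω => (f (t n) (X n ω) 0 0) ^ 2) P :=
    fun n hn => (hf0L2 n hn).integrable_sq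
  have hf0nonneg : ∀ n, (0:ℝ) ≤ ∫ ω, (f (t n) (X n ω) 0 0) ^ 2 ∂P :=
    fun n => integral_nonneg fun ω => sq_nonneg _
  have hZ2nonneg : ∀ n, (0:ℝ) ≤ ∫ ω, (∑ i, Z n ω i ^ 2) ∂P :=
    fun n => integral_nonneg fun ω => Finset.sum_nonneg fun i _ => sq_nonneg _
  -- the martingale part M
  have hMprop : ∀ n, n ≤ N → Measurable[F n] (M n) ∧ MemLp (M n) 2 P ∧
      (∫ ω, (M n ω) ^ 2 ∂P) = (∫ ω, (Y 0 ω) ^ 2 ∂P)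
        + ∑ k ∈ Finset.range n, Δ k * ∫ ω, (∑ i, Z k ω i ^ 2) ∂P := by
    intro n
    induction n with
    | zero =>
        intro _
        have hM0 : M 0 = Y 0 := by
          funext ω; rw [hM]; simp
        rw [hM0]
        exact ⟨hY0meas, hY0L2, by simp⟩
    | succ n ih =>
        intro hn1
        have hn : n < N := by omega
        obtain ⟨ihmeas, ihL2, ihint⟩ := ih (by omega)
        have hkey := step_key (P := P) (Δ := Δ n) (hFle n) ihmeas ihL2 (hZmeas n hn) (hZL2 n hn)
          (hWL2 n hn) (hWindep n hn) (hWmean n hn)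
          (fun i j => by rw [hWcov n hn i j, hΔ n])
        have hMeq : M (n + 1) = fun ω => M n ω + ∑ i, Z n ω i * ΔW n ω i := by
          funext ω
          rw [hM, hM, Finset.sum_range_succ, hB]
          ring
        refine ⟨?_, ?_, ?_⟩
        · rw [hMeq]
          have h1 : Measurable[F (n + 1)] (M n) := ihmeas.mono (hFmono (Nat.le_succ n)) le_rfl
          have h2 : Measurable[F (n + 1)] (fun ω => ∑ i, Z n ω i * ΔW n ω i) := by
            apply Finset.measurable_sum
            intro i _
            exact (((measurable_pi_apply i).comp
                ((hZmeas n hn).mono (hFmono (Nat.le_succ n)) le_rfl)).mul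
              ((measurable_pi_apply i).comp (hWmeas n hn)))
          exact h1.add h2
        · rw [hMeq]; exact hkey.1
        · rw [hMeq]
          rw [hkey.2, ihint, Finset.sum_range_succ]
          ring
  -- M is L²-bounded by Q
  set Q : ℝ := (∫ ω, (Y 0 ω) ^ 2 ∂P)
      + ∑ n ∈ Finset.range N,
          ((∫ ω, (f (t n) (X n ω) 0 0) ^ 2 ∂P)
            + ∫ ω, (∑ i, (Z n ω i) ^ 2) ∂P) * (t (n + 1) - t n) with hQ
  have hY0nonneg : (0:ℝ) ≤ ∫ ω, (Y 0 ω) ^ 2 ∂P := integral_nonneg fun ω => sq_nonneg _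
  have hQsum_nonneg : ∀ n ∈ Finset.range N,
      (0:ℝ) ≤ ((∫ ω, (f (t n) (X n ω) 0 0) ^ 2 ∂P)
            + ∫ ω, (∑ i, (Z n ω i) ^ 2) ∂P) * (t (n + 1) - t n) := by
    intro n hn
    have hn' := Finset.mem_range.1 hn
    have := hΔpos n hn'
    rw [hΔ] at this
    exact mul_nonneg (add_nonneg (hf0nonneg n) (hZ2nonneg n)) this.le
  have hQnonneg : 0 ≤ Q := by
    rw [hQ]
    exact add_nonneg hY0nonneg (Finset.sum_nonneg hQsum_nonneg)
  have hMQ : ∀ n, n ≤ N → (∫ ω, (M n ω) ^ 2 ∂P) ≤ Q := by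
    intro n hn
    rw [(hMprop n hn).2.2, hQ]
    refine add_le_add le_rfl ?_
    calc (∑ k ∈ Finset.range n, Δ k * ∫ ω, (∑ i, Z k ω i ^ 2) ∂P)
        ≤ ∑ k ∈ Finset.range n,
            ((∫ ω, (f (t k) (X k ω) 0 0) ^ 2 ∂P)
              + ∫ ω, (∑ i, (Z k ω i) ^ 2) ∂P) * (t (k + 1) - t k) := by
          refine Finset.sum_le_sum fun k hk => ?_
          have hk' : k < N := by have := Finset.mem_range.1 hk; omega
          have hΔk := (hΔpos k hk')
          rw [hΔ] at hΔk
          rw [hΔ]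
          have := hf0nonneg k
          nlinarith [hZ2nonneg k]
      _ ≤ ∑ k ∈ Finset.range N,
            ((∫ ω, (f (t k) (X k ω) 0 0) ^ 2 ∂P)
              + ∫ ω, (∑ i, (Z k ω i) ^ 2) ∂P) * (t (k + 1) - t k) := by
          refine Finset.sum_le_sum_of_subset_of_nonneg
            (Finset.range_subset_range.2 hn) fun k hk _ => hQsum_nonneg k hk
  -- relation between Y and M
  have hYM : ∀ n, n ≤ N → ∀ ω, Y n ω = M n ω - ∑ k ∈ Finset.range n, Φ k ω * Δ k := by
    intro n
    induction n with
    | zero => intro _ ω; rw [hM]; simp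
    | succ n ih =>
        intro hn1 ω
        have hn : n < N := by omega
        rw [hScheme n hn ω, ← hΦ n ω, ih (by omega) ω, hM (n + 1), hM n,
          Finset.sum_range_succ,
          Finset.sum_range_succ (fun k => Φ k ω * Δ k), hB, hΔ]
        ring
  have hSnonneg : ∀ n, n ≤ N → ∀ ω, 0 ≤ S n ω := by
    intro n hn ω
    rw [hS]
    refine Finset.sum_nonneg fun k hk => ?_
    have hk' : k < N := by have := Finset.mem_range.1 hk; omega
    exact mul_nonneg (hΔpos k hk').le (abs_nonneg _)
  have hgnonneg : ∀ n ω, 0 ≤ g n ω := by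
    intro n ω
    rw [hg]
    have h1 : (0:ℝ) ≤ L * Real.sqrt (∑ i, Z n ω i ^ 2) := mul_nonneg hL (Real.sqrt_nonneg _)
    have h2 : (0:ℝ) ≤ L * |M n ω| := mul_nonneg hL (abs_nonneg _)
    have h3 : (0:ℝ) ≤ |f (t n) (X n ω) 0 0| := abs_nonneg _
    linarith
  have hYMb : ∀ n, n ≤ N → ∀ ω, |Y n ω - M n ω| ≤ S n ω := by
    intro n hn ω
    rw [hYM n hn ω, hS]
    calc |M n ω - ∑ k ∈ Finset.range n, Φ k ω * Δ k - M n ω|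
        = |∑ k ∈ Finset.range n, Φ k ω * Δ k| := by rw [abs_sub_comm]; ring_nf
      _ ≤ ∑ k ∈ Finset.range n, |Φ k ω * Δ k| := Finset.abs_sum_le_sum_abs _ _
      _ = ∑ k ∈ Finset.range n, Δ k * |Φ k ω| := by
          refine Finset.sum_congr rfl fun k hk => ?_
          have hk' : k < N := by have := Finset.mem_range.1 hk; omega
          rw [abs_mul, abs_of_nonneg (hΔpos k hk').le, mul_comm]
  have hΦb : ∀ n, n < N → ∀ ω, |Φ n ω| ≤ g n ω + L * S n ω := by
    intro n hn ω
    have hlip := hLip (t n) (X n ω) (Y n ω) (Z n ω) 0 0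
    simp only [sub_zero, Pi.zero_apply] at hlip
    have hY : |Y n ω| ≤ |M n ω| + S n ω := by
      have := hYMb n hn.le ω
      have h2 := abs_sub_abs_le_abs_sub (Y n ω) (M n ω)
      linarith
    have habs : |Φ n ω| ≤ |f (t n) (X n ω) 0 0|
        + L * (|Y n ω| + Real.sqrt (∑ i, Z n ω i ^ 2)) := by
      have h3 : |Φ n ω| - |f (t n) (X n ω) 0 0| ≤ |Φ n ω - f (t n) (X n ω) 0 0| :=
        abs_sub_abs_le_abs_sub _ _
      rw [hΦ]
      rw [hΦ] at h3
      linarith [hlip]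
    rw [hg]
    have hsqrt : (0:ℝ) ≤ Real.sqrt (∑ i, Z n ω i ^ 2) := Real.sqrt_nonneg _
    nlinarith [hY, habs]
  -- discrete pointwise Grönwall
  have hSbound : ∀ n, n ≤ N → ∀ ω,
      S n ω ≤ Real.exp (L * t n) * ∑ k ∈ Finset.range n, Δ k * g k ω := by
    intro n
    induction n with
    | zero => intro _ ω; rw [hS]; simp
    | succ n ih =>
        intro hn1 ω
        have hn : n < N := by omega
        have hEnn : 0 ≤ ∑ k ∈ Finset.range n, Δ k * g k ω :=
          Finset.sum_nonneg fun k hk => mul_nonneg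
            (hΔpos k (by have := Finset.mem_range.1 hk; omega)).le (hgnonneg k ω)
        have ihb := ih (by omega) ω
        have hΔn := hΔpos n hn
        have hgb := hΦb n hn ω
        have hSn := hSnonneg n (by omega) ω
        have hgn := hgnonneg n ω
        have hexp1 : (1:ℝ) + L * Δ n ≤ Real.exp (L * Δ n) := by
          have := Real.add_one_le_exp (L * Δ n)
          linarith
        have hexpadd : Real.exp (L * t (n + 1))
            = Real.exp (L * t n) * Real.exp (L * Δ n) := by
          rw [← Real.exp_add, hΔ]
          ring_nf
        have hexpge1 : (1:ℝ) ≤ Real.exp (L * t (n + 1)) := by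
          have h0 : 0 ≤ L * t (n + 1) := mul_nonneg hL (ht0n (n + 1) hn1)
          exact Real.one_le_exp h0
        have hstep : S (n + 1) ω ≤ (1 + L * Δ n) * S n ω + Δ n * g n ω := by
          rw [hS, Finset.sum_range_succ, ← hS]
          nlinarith [hgb]
        have hexppos : (0:ℝ) < Real.exp (L * t n) := Real.exp_pos _
        calc S (n + 1) ω ≤ (1 + L * Δ n) * S n ω + Δ n * g n ω := hstep
          _ ≤ (1 + L * Δ n) * (Real.exp (L * t n) * ∑ k ∈ Finset.range n, Δ k * g k ω)
              + Δ n * g n ω := by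
              have hpos : (0:ℝ) ≤ 1 + L * Δ n := by nlinarith
              nlinarith [mul_le_mul_of_nonneg_left ihb hpos]
          _ ≤ Real.exp (L * Δ n) * (Real.exp (L * t n) * ∑ k ∈ Finset.range n, Δ k * g k ω)
              + Δ n * g n ω := by
              have := mul_nonneg hexppos.le hEnn
              nlinarith [mul_le_mul_of_nonneg_right hexp1 this]
          _ ≤ Real.exp (L * t (n + 1)) * ∑ k ∈ Finset.range (n + 1), Δ k * g k ω := by
              rw [Finset.sum_range_succ, hexpadd]
              nlinarith [mul_nonneg hΔn.le hgn]
  -- pointwise quadratic bound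
  have hpoint : ∀ ω, (Y N ω) ^ 2 ≤ 2 * (M N ω) ^ 2
      + 2 * Real.exp (2 * L * T) * T * ∑ k ∈ Finset.range N, Δ k * (g k ω) ^ 2 := by
    intro ω
    have hu : |Y N ω - M N ω| ≤ Real.exp (L * T) * ∑ k ∈ Finset.range N, Δ k * g k ω := by
      have h1 := hYMb N le_rfl ω
      have h2 := hSbound N le_rfl ω
      rw [htN] at h2
      linarith
    have hEnn : 0 ≤ ∑ k ∈ Finset.range N, Δ k * g k ω :=
      Finset.sum_nonneg fun k hk => mul_nonneg
        (hΔpos k (Finset.mem_range.1 hk)).le (hgnonneg k ω)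
    -- Cauchy–Schwarz
    have hCS : (∑ k ∈ Finset.range N, Δ k * g k ω) ^ 2
        ≤ T * ∑ k ∈ Finset.range N, Δ k * (g k ω) ^ 2 := by
      have h := Finset.sum_mul_sq_le_sq_mul_sq (Finset.range N)
        (fun k => Real.sqrt (Δ k)) (fun k => Real.sqrt (Δ k) * g k ω)
      have e1 : ∀ k ∈ Finset.range N,
          Real.sqrt (Δ k) * (Real.sqrt (Δ k) * g k ω) = Δ k * g k ω := by
        intro k hk
        rw [← mul_assoc, Real.mul_self_sqrt (hΔpos k (Finset.mem_range.1 hk)).le]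
      have e2 : ∀ k ∈ Finset.range N, Real.sqrt (Δ k) ^ 2 = Δ k := by
        intro k hk
        exact Real.sq_sqrt (hΔpos k (Finset.mem_range.1 hk)).le
      have e3 : ∀ k ∈ Finset.range N,
          (Real.sqrt (Δ k) * g k ω) ^ 2 = Δ k * (g k ω) ^ 2 := by
        intro k hk
        rw [mul_pow, Real.sq_sqrt (hΔpos k (Finset.mem_range.1 hk)).le]
      rw [Finset.sum_congr rfl e1, Finset.sum_congr rfl e2, Finset.sum_congr rfl e3] at h
      have hTsum : (∑ k ∈ Finset.range N, Δ k) = T := by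
        rw [hΔsum N, ht0, htN]; ring
      rwa [hTsum] at h
    have hexp2 : Real.exp (L * T) ^ 2 = Real.exp (2 * L * T) := by
      rw [sq, ← Real.exp_add]; ring_nf
    have hu2 : (Y N ω - M N ω) ^ 2
        ≤ Real.exp (2 * L * T) * (T * ∑ k ∈ Finset.range N, Δ k * (g k ω) ^ 2) := by
      have h1 : (Y N ω - M N ω) ^ 2
          ≤ (Real.exp (L * T) * ∑ k ∈ Finset.range N, Δ k * g k ω) ^ 2 := by
        have := abs_nonneg (Y N ω - M N ω)
        nlinarith [hu, sq_abs (Y N ω - M N ω)]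
      have h2 : (Real.exp (L * T) * ∑ k ∈ Finset.range N, Δ k * g k ω) ^ 2
          = Real.exp (L * T) ^ 2 * (∑ k ∈ Finset.range N, Δ k * g k ω) ^ 2 := by ring
      rw [h2, hexp2] at h1
      have hexppos : (0:ℝ) < Real.exp (2 * L * T) := Real.exp_pos _
      nlinarith [hCS]
    nlinarith [sq_nonneg (Y N ω - M N ω - (Y N ω - M N ω)), sq_nonneg (Y N ω - 2 * M N ω), hu2,
      sq_nonneg (M N ω)]
  -- L² facts for g
  have hgL2 : ∀ n, n < N → MemLp (g n) 2 P := by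
    intro n hn
    have h1 : MemLp (fun ω => |f (t n) (X n ω) 0 0|) 2 P := memL2_abs (hf0L2 n hn)
    have h2 : MemLp (fun ω => L * Real.sqrt (∑ i, Z n ω i ^ 2)) 2 P :=
      (memL2_sqrt_sum_sq (hZL2 n hn)).const_mul L
    have h3 : MemLp (fun ω => L * |M n ω|) 2 P :=
      (memL2_abs (hMprop n hn.le).2.1).const_mul L
    have hgeq : g n = fun ω => |f (t n) (X n ω) 0 0|
        + L * Real.sqrt (∑ i, Z n ω i ^ 2) + L * |M n ω| := funext fun ω => hg n ω
    rw [hgeq]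
    exact (h1.add h2).add h3
  -- integrable majorant
  have hMNsq : Integrable (fun ω => (M N ω) ^ 2) P := (hMprop N le_rfl).2.1.integrable_sq
  have h1 : Integrable (fun ω => 2 * (M N ω) ^ 2) P := hMNsq.const_mul 2
  have hsummand : ∀ k ∈ Finset.range N, Integrable (fun ω => Δ k * (g k ω) ^ 2) P :=
    fun k hk => ((hgL2 k (Finset.mem_range.1 hk)).integrable_sq).const_mul (Δ k)
  have h2 : Integrable (fun ω => ∑ k ∈ Finset.range N, Δ k * (g k ω) ^ 2) P :=
    integrable_finset_sum _ hsummand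
  have h3 : Integrable (fun ω =>
      2 * Real.exp (2 * L * T) * T * ∑ k ∈ Finset.range N, Δ k * (g k ω) ^ 2) P :=
    h2.const_mul _
  have hLHS : (∫ ω, (Y N ω) ^ 2 ∂P) ≤ ∫ ω, (2 * (M N ω) ^ 2
      + 2 * Real.exp (2 * L * T) * T * ∑ k ∈ Finset.range N, Δ k * (g k ω) ^ 2) ∂P := by
    by_cases hYint : Integrable (fun ω => (Y N ω) ^ 2) P
    · exact integral_mono hYint (h1.add h3) hpoint
    · rw [integral_undef hYint]
      refine integral_nonneg fun ω => add_nonneg (by positivity)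
        (mul_nonneg (by positivity) (Finset.sum_nonneg fun k hk =>
          mul_nonneg (hΔpos k (Finset.mem_range.1 hk)).le (sq_nonneg _)))
  have hDomval : (∫ ω, (2 * (M N ω) ^ 2
      + 2 * Real.exp (2 * L * T) * T * ∑ k ∈ Finset.range N, Δ k * (g k ω) ^ 2) ∂P)
      = 2 * (∫ ω, (M N ω) ^ 2 ∂P)
        + 2 * Real.exp (2 * L * T) * T
          * ∑ k ∈ Finset.range N, Δ k * (∫ ω, (g k ω) ^ 2 ∂P) := by
    rw [integral_add h1 h3, integral_const_mul, integral_const_mul,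
      integral_finset_sum _ hsummand]
    congr 1
    congr 1
    exact Finset.sum_congr rfl fun k hk => integral_const_mul _ _
  -- bound the integral of g²
  have hg2b : ∀ k, k < N → (∫ ω, (g k ω) ^ 2 ∂P)
      ≤ 3 * (∫ ω, (f (t k) (X k ω) 0 0) ^ 2 ∂P)
        + 3 * L ^ 2 * (∫ ω, (∑ i, Z k ω i ^ 2) ∂P) + 3 * L ^ 2 * Q := by
    intro k hk
    have key : ∀ a b c : ℝ, (a + b + c) ^ 2 ≤ 3 * a ^ 2 + 3 * b ^ 2 + 3 * c ^ 2 := by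
      intro a b c
      nlinarith [sq_nonneg (a - b), sq_nonneg (a - c), sq_nonneg (b - c)]
    have hptw : ∀ ω, (g k ω) ^ 2 ≤ 3 * (f (t k) (X k ω) 0 0) ^ 2
        + 3 * L ^ 2 * (∑ i, Z k ω i ^ 2) + 3 * L ^ 2 * (M k ω) ^ 2 := by
      intro ω
      rw [hg]
      have hb : Real.sqrt (∑ i, Z k ω i ^ 2) ^ 2 = ∑ i, Z k ω i ^ 2 :=
        Real.sq_sqrt (Finset.sum_nonneg fun i _ => sq_nonneg _)
      have h4 : (L * Real.sqrt (∑ i, Z k ω i ^ 2)) ^ 2 = L ^ 2 * ∑ i, Z k ω i ^ 2 := by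
        rw [mul_pow, hb]
      have h5 : (L * |M k ω|) ^ 2 = L ^ 2 * (M k ω) ^ 2 := by
        rw [mul_pow, sq_abs]
      have h6 : |f (t k) (X k ω) 0 0| ^ 2 = (f (t k) (X k ω) 0 0) ^ 2 := sq_abs _
      have h7 := key |f (t k) (X k ω) 0 0| (L * Real.sqrt (∑ i, Z k ω i ^ 2)) (L * |M k ω|)
      linarith
    have hA : Integrable (fun ω => 3 * (f (t k) (X k ω) 0 0) ^ 2) P :=
      (hIntf0 k hk).const_mul 3
    have hBB : Integrable (fun ω => 3 * L ^ 2 * (∑ i, Z k ω i ^ 2)) P :=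
      (hIntZ2 k hk).const_mul (3 * L ^ 2)
    have hCC : Integrable (fun ω => 3 * L ^ 2 * (M k ω) ^ 2) P :=
      ((hMprop k hk.le).2.1.integrable_sq).const_mul (3 * L ^ 2)
    have hAB : Integrable (fun ω => 3 * (f (t k) (X k ω) 0 0) ^ 2
        + 3 * L ^ 2 * (∑ i, Z k ω i ^ 2)) P := hA.add hBB
    have hIntRHS : Integrable (fun ω => 3 * (f (t k) (X k ω) 0 0) ^ 2
        + 3 * L ^ 2 * (∑ i, Z k ω i ^ 2) + 3 * L ^ 2 * (M k ω) ^ 2) P := hAB.add hCC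
    have hmono := integral_mono (hgL2 k hk).integrable_sq hIntRHS hptw
    rw [integral_add hAB hCC, integral_add hA hBB,
      integral_const_mul, integral_const_mul, integral_const_mul] at hmono
    have hMk := hMQ k hk.le
    nlinarith [sq_nonneg L]
  -- sum the g² bounds
  have hsum_g : ∑ k ∈ Finset.range N, Δ k * (∫ ω, (g k ω) ^ 2 ∂P)
      ≤ 3 * (1 + L ^ 2) * (1 + T) * Q := by
    have hterm : ∀ k ∈ Finset.range N, Δ k * (∫ ω, (g k ω) ^ 2 ∂P)
        ≤ 3 * (1 + L ^ 2) * (((∫ ω, (f (t k) (X k ω) 0 0) ^ 2 ∂P)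
            + ∫ ω, (∑ i, (Z k ω i) ^ 2) ∂P) * (t (k + 1) - t k)) + 3 * L ^ 2 * Q * Δ k := by
      intro k hk
      have hk' := Finset.mem_range.1 hk
      have hΔk := hΔpos k hk'
      have hgb := hg2b k hk'
      have hgint_nonneg : (0:ℝ) ≤ ∫ ω, (g k ω) ^ 2 ∂P :=
        integral_nonneg fun ω => sq_nonneg _
      have hmul := mul_le_mul_of_nonneg_left hgb hΔk.le
      rw [hΔ] at hmul hΔk ⊢
      nlinarith [hf0nonneg k, hZ2nonneg k, hQnonneg, sq_nonneg L,
        mul_nonneg (hf0nonneg k) hΔk.le, mul_nonneg (hZ2nonneg k) hΔk.le,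
        mul_nonneg (mul_nonneg (sq_nonneg L) (hf0nonneg k)) hΔk.le,
        mul_nonneg (mul_nonneg (sq_nonneg L) (hZ2nonneg k)) hΔk.le]
    calc ∑ k ∈ Finset.range N, Δ k * (∫ ω, (g k ω) ^ 2 ∂P)
        ≤ ∑ k ∈ Finset.range N,
            (3 * (1 + L ^ 2) * (((∫ ω, (f (t k) (X k ω) 0 0) ^ 2 ∂P)
              + ∫ ω, (∑ i, (Z k ω i) ^ 2) ∂P) * (t (k + 1) - t k)) + 3 * L ^ 2 * Q * Δ k) :=
          Finset.sum_le_sum hterm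
      _ = 3 * (1 + L ^ 2) * (∑ k ∈ Finset.range N,
            ((∫ ω, (f (t k) (X k ω) 0 0) ^ 2 ∂P)
              + ∫ ω, (∑ i, (Z k ω i) ^ 2) ∂P) * (t (k + 1) - t k))
          + 3 * L ^ 2 * Q * (∑ k ∈ Finset.range N, Δ k) := by
          rw [Finset.sum_add_distrib, ← Finset.mul_sum, ← Finset.mul_sum]
      _ ≤ 3 * (1 + L ^ 2) * (1 + T) * Q := by
          have hQs : (∑ k ∈ Finset.range N,
              ((∫ ω, (f (t k) (X k ω) 0 0) ^ 2 ∂P)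
                + ∫ ω, (∑ i, (Z k ω i) ^ 2) ∂P) * (t (k + 1) - t k)) ≤ Q := by
            rw [hQ]; linarith [hY0nonneg]
          have hQs0 : (0:ℝ) ≤ ∑ k ∈ Finset.range N,
              ((∫ ω, (f (t k) (X k ω) 0 0) ^ 2 ∂P)
                + ∫ ω, (∑ i, (Z k ω i) ^ 2) ∂P) * (t (k + 1) - t k) :=
            Finset.sum_nonneg hQsum_nonneg
          have hTs : (∑ k ∈ Finset.range N, Δ k) = T := by
            rw [hΔsum N, ht0, htN]; ring
          rw [hTs]
          have hc1 : (0:ℝ) ≤ 3 * (1 + L ^ 2) := by positivity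
          have hm1 := mul_le_mul_of_nonneg_left hQs hc1
          nlinarith [mul_nonneg hT.le hQnonneg, sq_nonneg L,
            mul_nonneg (mul_nonneg (sq_nonneg L) hT.le) hQnonneg]
  -- final assembly
  have hMN := hMQ N le_rfl
  have hc : (0:ℝ) ≤ 2 * Real.exp (2 * L * T) * T := by positivity
  have hfin := mul_le_mul_of_nonneg_left hsum_g hc
  calc (∫ ω, (Y N ω) ^ 2 ∂P)
      ≤ ∫ ω, (2 * (M N ω) ^ 2
          + 2 * Real.exp (2 * L * T) * T * ∑ k ∈ Finset.range N, Δ k * (g k ω) ^ 2) ∂P := hLHS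
    _ = 2 * (∫ ω, (M N ω) ^ 2 ∂P)
        + 2 * Real.exp (2 * L * T) * T
          * ∑ k ∈ Finset.range N, Δ k * (∫ ω, (g k ω) ^ 2 ∂P) := hDomval
    _ ≤ C * (Q + 1) := by
        rw [hC]
        have hpos6 : (0:ℝ) ≤ 6 * Real.exp (2 * L * T) * T * (1 + L ^ 2) * (1 + T) := by
          positivity
        nlinarith [hfin, hMN, hQnonneg, hpos6]
end
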